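/- Let {δ_t}_{t=1}^{T-1} be random vectors in a finite-dimensional real normed space, with δ_t measurable with respect to F_t, and suppose there is σ > 0 such that E[exp(‖δ_t‖²/σ²) | F_{t-1}] ≤ e a.s. for each t. Let w_1,…,w_{T-1} > 0 and C := Σ_{t=1}^{T-1} w_t. Then for every p > 0, Pr{ Σ_{t=1}^{T-1} w_t ‖δ_t‖² > (1+p) C σ² } ≤ exp(-p). -/

import Mathlib

open MeasureTheory ENNReal

/-- Let `{δ_t}_{t=1}^{T-1}` be random vectors in a finite-dimensional real normed
space, `δ_t` measurable w.r.t. `F_t`, with `E[exp(‖δ_t‖²/σ²) | F_{t-1}] ≤ e` a.s. for some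
`σ > 0`. For positive weights `w_t` with `C = Σ_{t=1}^{T-1} w_t`, for every `p > 0`,
`Pr{ Σ_{t=1}^{T-1} w_t ‖δ_t‖² > (1+p) C σ² } ≤ exp(-p)`. -/
theorem weighted_subgaussian_norm_sq_tail_bound
    {Ω : Type*} {m0 : MeasurableSpace Ω} (μ : Measure Ω) [IsProbabilityMeasure μ]
    (F : Filtration ℕ m0)
    {E : Type*} [NormedAddCommGroup E] [NormedSpace ℝ E] [FiniteDimensional ℝ E]
    (T : ℕ) (δ : ℕ → Ω → E) (σ : ℝ) (hσ : 0 < σ)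
    (w : ℕ → ℝ) (hw : ∀ t ∈ Finset.Icc 1 (T - 1), 0 < w t)
    (hadapted : ∀ t ∈ Finset.Icc 1 (T - 1), StronglyMeasurable[F t] (δ t))
    (hexp_int : ∀ t ∈ Finset.Icc 1 (T - 1),
      Integrable (fun ω => Real.exp (‖δ t ω‖ ^ 2 / σ ^ 2)) μ)
    (hsubg : ∀ t ∈ Finset.Icc 1 (T - 1),
      ∀ᵐ ω ∂μ, (μ[fun ω' => Real.exp (‖δ t ω'‖ ^ 2 / σ ^ 2) | F (t - 1)]) ω ≤ Real.exp 1) :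
    ∀ p : ℝ, 0 < p →
      μ {ω | (1 + p) * (∑ t ∈ Finset.Icc 1 (T - 1), w t) * σ ^ 2
              < ∑ t ∈ Finset.Icc 1 (T - 1), w t * ‖δ t ω‖ ^ 2}
        ≤ ENNReal.ofReal (Real.exp (-p)) := by
  intro p hp
  set s := Finset.Icc 1 (T - 1) with hs
  by_cases hne : s.Nonempty
  swap
  · rw [Finset.not_nonempty_iff_eq_empty] at hne
    simp [hne]
  set C : ℝ := ∑ t ∈ s, w t with hC
  have hCpos : 0 < C := Finset.sum_pos hw hne
  have hσ2 : 0 < C * σ ^ 2 := mul_pos hCpos (by positivity)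
  set X : Ω → ℝ := fun ω => ∑ t ∈ s, w t * ‖δ t ω‖ ^ 2 with hX
  set g : Ω → ℝ := fun ω => Real.exp (X ω / (C * σ ^ 2)) with hg
  set mix : Ω → ℝ := fun ω => ∑ t ∈ s, (w t / C) * Real.exp (‖δ t ω‖ ^ 2 / σ ^ 2) with hmix
  -- pointwise Jensen
  have hJensen : ∀ ω, g ω ≤ mix ω := by
    intro ω
    have hw1 : ∑ t ∈ s, w t / C = 1 := by
      rw [← Finset.sum_div]; field_simp; exact hC.symm
    have harg : X ω / (C * σ ^ 2) = ∑ t ∈ s, (w t / C) • (‖δ t ω‖ ^ 2 / σ ^ 2) := by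
      rw [hX, Finset.sum_div]
      refine Finset.sum_congr rfl fun t ht => ?_
      simp only [smul_eq_mul]
      rw [mul_comm (w t / C)]
      field_simp
    have := convexOn_exp.map_sum_le (t := s)
      (w := fun t => w t / C) (p := fun t => ‖δ t ω‖ ^ 2 / σ ^ 2)
      (fun t ht => div_nonneg (hw t ht).le hCpos.le) hw1 (fun t _ => Set.mem_univ _)
    simpa [hg, harg, smul_eq_mul] using this
  -- measurability of g
  have hgm : Measurable g := by
    refine Real.measurable_exp.comp ?_
    apply Measurable.div_const
    apply Finset.measurable_sum
    intro t ht
    exact ((((hadapted t ht).mono (F.le t)).norm.measurable).pow measurable_const).const_mul _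
  have hmix_int : Integrable mix μ :=
    integrable_finset_sum _ fun t ht => (hexp_int t ht).const_mul _
  have hg_int : Integrable g μ := by
    refine hmix_int.mono' hgm.aestronglyMeasurable (Filter.Eventually.of_forall fun ω => ?_)
    rw [Real.norm_eq_abs, abs_of_pos (Real.exp_pos _)]
    exact hJensen ω
  -- each integral of exp bounded by e
  have hint_le : ∀ t ∈ s, ∫ ω, Real.exp (‖δ t ω‖ ^ 2 / σ ^ 2) ∂μ ≤ Real.exp 1 := by
    intro t ht
    have h1 : ∫ ω, Real.exp (‖δ t ω‖ ^ 2 / σ ^ 2) ∂μ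
        = ∫ ω, (μ[fun ω' => Real.exp (‖δ t ω'‖ ^ 2 / σ ^ 2) | F (t - 1)]) ω ∂μ :=
      (integral_condExp (F.le (t - 1))).symm
    rw [h1]
    calc ∫ ω, (μ[fun ω' => Real.exp (‖δ t ω'‖ ^ 2 / σ ^ 2) | F (t - 1)]) ω ∂μ
        ≤ ∫ _ω, Real.exp 1 ∂μ :=
          integral_mono_ae integrable_condExp (integrable_const _) (hsubg t ht)
      _ = Real.exp 1 := by simp
  have hIg : ∫ ω, g ω ∂μ ≤ Real.exp 1 := by
    calc ∫ ω, g ω ∂μ ≤ ∫ ω, mix ω ∂μ :=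
          integral_mono hg_int hmix_int hJensen
      _ = ∑ t ∈ s, (w t / C) * ∫ ω, Real.exp (‖δ t ω‖ ^ 2 / σ ^ 2) ∂μ := by
          rw [hmix, integral_finset_sum _ fun t ht => (hexp_int t ht).const_mul _]
          exact Finset.sum_congr rfl fun t ht => integral_const_mul _ _
      _ ≤ ∑ t ∈ s, (w t / C) * Real.exp 1 := by
          refine Finset.sum_le_sum fun t ht => ?_
          exact mul_le_mul_of_nonneg_left (hint_le t ht) (div_nonneg (hw t ht).le hCpos.le)
      _ = Real.exp 1 := by
          rw [← Finset.sum_mul, ← Finset.sum_div, ← hC, div_self hCpos.ne', one_mul]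
  -- Markov
  set ε : ℝ := Real.exp (1 + p) with hε
  have hsub : {ω | (1 + p) * C * σ ^ 2 < X ω} ⊆ {ω | ε ≤ g ω} := by
    intro ω hω
    simp only [Set.mem_setOf_eq] at hω ⊢
    rw [hε, hg]
    apply Real.exp_le_exp.mpr
    rw [le_div_iff₀ hσ2]
    linarith [hω]
  have hmar := mul_meas_ge_le_integral_of_nonneg
    (Filter.Eventually.of_forall fun ω => (Real.exp_pos _).le) hg_int ε
  have hεpos : 0 < ε := Real.exp_pos _
  have htr : (μ {ω | ε ≤ g ω}).toReal ≤ Real.exp (-p) := by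
    have h2 : ε * (μ {ω | ε ≤ g ω}).toReal ≤ Real.exp 1 := hmar.trans hIg
    have h3 : (μ {ω | ε ≤ g ω}).toReal ≤ Real.exp 1 / ε := by
      rw [le_div_iff₀ hεpos]; linarith [h2]
    calc (μ {ω | ε ≤ g ω}).toReal ≤ Real.exp 1 / ε := h3
      _ = Real.exp (-p) := by rw [hε, ← Real.exp_sub]; ring_nf
  calc μ {ω | (1 + p) * C * σ ^ 2 < ∑ t ∈ s, w t * ‖δ t ω‖ ^ 2} ≤ μ {ω | ε ≤ g ω} :=
      measure_mono hsub
    _ = ENNReal.ofReal ((μ {ω | ε ≤ g ω}).toReal) := (ENNReal.ofReal_toReal (measure_ne_top μ _)).symm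
    _ ≤ ENNReal.ofReal (Real.exp (-p)) := ENNReal.ofReal_le_ofReal htr
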